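/- Let v be a continuous vector field on the unit sphere S² = {x ∈ ℝ³ : ‖x‖ = 1} with ⟪v(x), x⟫ = 0 for every x ∈ S². Define w : B³ → ℝ³ on the closed unit ball by w(0) = 0 and w(x) = ‖x‖·v(x/‖x‖) + ‖x‖(1 − ‖x‖)·x for x ≠ 0. Then: (i) w is continuous on B³; (ii) w(x) = v(x) for every x with ‖x‖ = 1; (iii) for x ∈ B³, w(x) = 0 if and only if x = 0 or (‖x‖ = 1 and v(x) = 0). -/

import Mathlib

open Metric Filter Topology

/-- **Explicit extension of sphere dynamics through the solid ball.**
Given a continuous tangent vector field `v` on the unit sphere `S² ⊆ ℝ³`, the field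
`w(0) = 0`, `w(x) = ‖x‖ • v(x/‖x‖) + ‖x‖(1 - ‖x‖) • x` for `x ≠ 0`, is
(i) continuous on the closed unit ball, (ii) agrees with `v` on the sphere, and
(iii) vanishes at `x` in the ball iff `x = 0` or (`‖x‖ = 1` and `v x = 0`). -/
theorem explicit_extension_to_ball
    (v : EuclideanSpace ℝ (Fin 3) → EuclideanSpace ℝ (Fin 3))
    (hv_cont : ContinuousOn v (sphere (0 : EuclideanSpace ℝ (Fin 3)) 1))
    (hv_tan : ∀ x : EuclideanSpace ℝ (Fin 3), ‖x‖ = 1 → inner ℝ (v x) x = (0 : ℝ))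
    (w : EuclideanSpace ℝ (Fin 3) → EuclideanSpace ℝ (Fin 3))
    (hw0 : w 0 = 0)
    (hw : ∀ x : EuclideanSpace ℝ (Fin 3), x ≠ 0 →
      w x = ‖x‖ • v (‖x‖⁻¹ • x) + (‖x‖ * (1 - ‖x‖)) • x) :
    ContinuousOn w (closedBall (0 : EuclideanSpace ℝ (Fin 3)) 1) ∧
    (∀ x : EuclideanSpace ℝ (Fin 3), ‖x‖ = 1 → w x = v x) ∧
    (∀ x : EuclideanSpace ℝ (Fin 3), ‖x‖ ≤ 1 →
      (w x = 0 ↔ x = 0 ∨ (‖x‖ = 1 ∧ v x = 0))) := by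
  have key2 : ∀ x : EuclideanSpace ℝ (Fin 3), ‖x‖ = 1 → w x = v x := by
    intro x hx
    have hx0 : x ≠ 0 := by
      intro h; rw [h, norm_zero] at hx; norm_num at hx
    rw [hw x hx0, hx]
    simp
  refine ⟨?_, key2, ?_⟩
  · -- continuity
    set f : EuclideanSpace ℝ (Fin 3) → EuclideanSpace ℝ (Fin 3) := fun y => ‖y‖ • v (‖y‖⁻¹ • y) + (‖y‖ * (1 - ‖y‖)) • y with hf
    have hwf : ∀ y : EuclideanSpace ℝ (Fin 3), w y = f y := by
      intro y
      rcases eq_or_ne y 0 with rfl | hy0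
      · simp [hf, hw0]
      · exact hw y hy0
    intro x hx
    rcases eq_or_ne x 0 with rfl | hx0
    · rw [ContinuousWithinAt, hw0]
      obtain ⟨C, hC⟩ := (isCompact_sphere (0:EuclideanSpace ℝ (Fin 3)) 1).exists_bound_of_continuousOn hv_cont
      apply squeeze_zero_norm' (a := fun y : EuclideanSpace ℝ (Fin 3) => (max C 0 + 1) * ‖y‖)
      · filter_upwards [self_mem_nhdsWithin] with y hy
        rcases eq_or_ne y 0 with rfl | hy0
        · simp [hw0]
        · rw [hw y hy0]
          have hu : (‖y‖⁻¹ • y) ∈ sphere (0:EuclideanSpace ℝ (Fin 3)) 1 := by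
            rw [mem_sphere_zero_iff_norm]
            exact norm_smul_inv_norm hy0
          have hy1 : ‖y‖ ≤ 1 := by simpa using hy
          have hy0' : (0:ℝ) ≤ ‖y‖ := norm_nonneg y
          have h1 : ‖(‖y‖:ℝ) • v (‖y‖⁻¹ • y)‖ ≤ ‖y‖ * max C 0 := by
            rw [norm_smul, Real.norm_eq_abs, abs_of_nonneg hy0']
            exact mul_le_mul_of_nonneg_left ((hC _ hu).trans (le_max_left _ _)) hy0'
          have h2 : ‖((‖y‖ * (1 - ‖y‖)) : ℝ) • y‖ ≤ ‖y‖ := by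
            rw [norm_smul, Real.norm_eq_abs]
            have : |‖y‖ * (1 - ‖y‖)| = ‖y‖ * (1 - ‖y‖) := by
              apply abs_of_nonneg; nlinarith
            rw [this]
            nlinarith [mul_nonneg hy0' (sub_nonneg.2 hy1), pow_nonneg hy0' 3,
              mul_nonneg (mul_nonneg hy0' hy0') hy0']
          calc ‖(‖y‖:ℝ) • v (‖y‖⁻¹ • y) + ((‖y‖ * (1 - ‖y‖)):ℝ) • y‖
              ≤ ‖(‖y‖:ℝ) • v (‖y‖⁻¹ • y)‖ + ‖((‖y‖ * (1 - ‖y‖)):ℝ) • y‖ := norm_add_le _ _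
            _ ≤ ‖y‖ * max C 0 + ‖y‖ := add_le_add h1 h2
            _ = (max C 0 + 1) * ‖y‖ := by ring
      · have hcont : Tendsto (fun y : EuclideanSpace ℝ (Fin 3) => (max C 0 + 1) * ‖y‖) (nhds 0) (nhds 0) := by
          have hc : Continuous (fun y : EuclideanSpace ℝ (Fin 3) => (max C 0 + 1) * ‖y‖) :=
            continuous_const.mul continuous_norm
          simpa using hc.tendsto 0
        exact hcont.mono_left nhdsWithin_le_nhds
    · -- x ≠ 0
      have hmem : closedBall (0:EuclideanSpace ℝ (Fin 3)) 1 ∩ {(0:EuclideanSpace ℝ (Fin 3))}ᶜ ∈ nhdsWithin x (closedBall (0:EuclideanSpace ℝ (Fin 3)) 1) := by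
        apply Filter.inter_mem self_mem_nhdsWithin
        exact mem_nhdsWithin_of_mem_nhds (isOpen_compl_singleton.mem_nhds hx0)
      have hfc : ContinuousOn f (closedBall (0:EuclideanSpace ℝ (Fin 3)) 1 ∩ {(0:EuclideanSpace ℝ (Fin 3))}ᶜ) := by
        apply ContinuousOn.add
        · apply ContinuousOn.smul continuous_norm.continuousOn
          exact hv_cont.comp
            ((continuousOn_id.norm.inv₀ (fun y hy => norm_ne_zero_iff.mpr hy.2)).smul
              continuousOn_id)
            (fun y hy => by
              rw [mem_sphere_zero_iff_norm]
              exact norm_smul_inv_norm hy.2)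
        · exact (continuous_norm.mul (continuous_const.sub continuous_norm)).continuousOn.smul
            continuousOn_id
      have : ContinuousWithinAt f (closedBall (0:EuclideanSpace ℝ (Fin 3)) 1 ∩ {(0:EuclideanSpace ℝ (Fin 3))}ᶜ) x :=
        hfc x ⟨hx, hx0⟩
      have hcw : ContinuousWithinAt f (closedBall (0:EuclideanSpace ℝ (Fin 3)) 1) x := this.mono_of_mem_nhdsWithin hmem
      exact hcw.congr (fun y _ => hwf y) (hwf x)
  · intro x hx1
    constructor
    · intro hwx
      rcases eq_or_ne x 0 with rfl | hx0
      · exact Or.inl rfl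
      · right
        have hu1 : ‖(‖x‖⁻¹ • x : EuclideanSpace ℝ (Fin 3))‖ = 1 := norm_smul_inv_norm hx0
        have hxu : (‖x‖ : ℝ) • (‖x‖⁻¹ • x) = x := by
          rw [smul_smul, mul_inv_cancel₀ (norm_ne_zero_iff.mpr hx0), one_smul]
        have hinner : inner ℝ (w x) x = ‖x‖^3 * (1 - ‖x‖) := by
          rw [hw x hx0, inner_add_left, real_inner_smul_left, real_inner_smul_left,
            real_inner_self_eq_norm_sq]
          have hz : inner ℝ (v (‖x‖⁻¹ • x)) x = (0:ℝ) := by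
            have h := hv_tan _ hu1
            calc inner ℝ (v (‖x‖⁻¹ • x)) x
                = inner ℝ (v (‖x‖⁻¹ • x)) ((‖x‖:ℝ) • (‖x‖⁻¹ • x)) := by rw [hxu]
              _ = ‖x‖ * inner ℝ (v (‖x‖⁻¹ • x)) (‖x‖⁻¹ • x) := real_inner_smul_right _ _ _
              _ = 0 := by rw [h, mul_zero]
          rw [hz]; ring
        rw [hwx, inner_zero_left] at hinner
        have hxpos : 0 < ‖x‖ := norm_pos_iff.mpr hx0
        have hx1' : ‖x‖ = 1 := by
          have h3 : 0 < ‖x‖^3 := pow_pos hxpos 3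
          by_contra h
          have hlt : ‖x‖ < 1 := lt_of_le_of_ne hx1 h
          nlinarith [mul_pos h3 (by linarith : (0:ℝ) < 1 - ‖x‖)]
        refine ⟨hx1', ?_⟩
        rw [← key2 x hx1', hwx]
    · rintro (rfl | ⟨hx1', hv0⟩)
      · exact hw0
      · rw [key2 x hx1', hv0]
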